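/- arXiv:2105.14153 — 8 statements merged into one kernel-verified Lean document; each statement's English description precedes it below -/
import Mathlib

section
/- Assume the tentative-update setting, and additionally that f : ℝⁿ → ℝ is convex and differentiable with l(y) ≤ f(y) for all y ∈ ℝⁿ and l(x) = f(x). If x itself is a global minimizer of y ↦ l(y) + g(y) + (1/2)⟨y − x, (H + λI)(y − x)⟩ (i.e., x⁺ = x), then x is a global minimizer of f + g over ℝⁿ. -/
open scoped RealInnerProductSpace

/-- Tentative-update setting: if `x` itself minimizes
`y ↦ l(y) + g(y) + (1/2)⟨y − x, (H + λI)(y − x)⟩` (i.e. `x⁺ = x`), and `l` is a convex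
minorant of the convex differentiable `f` tight at `x`, then `x` globally minimizes `f + g`. -/
theorem stmt_3 (n : ℕ)
    (l g f : EuclideanSpace ℝ (Fin n) → ℝ)
    (hl : ConvexOn ℝ Set.univ l) (hg : ConvexOn ℝ Set.univ g)
    (H : Matrix (Fin n) (Fin n) ℝ)
    (hH : ∀ z : EuclideanSpace ℝ (Fin n), 0 ≤ ⟪z, Matrix.toEuclideanLin H z⟫)
    (lam : ℝ) (hlam : 0 < lam)
    (x : EuclideanSpace ℝ (Fin n))
    (hf : ConvexOn ℝ Set.univ f) (hfd : Differentiable ℝ f)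
    (hle : ∀ y, l y ≤ f y) (htight : l x = f x)
    (hmin : ∀ y,
      l x + g x + (1/2) * ⟪x - x, Matrix.toEuclideanLin (H + lam • 1) (x - x)⟫ ≤
      l y + g y + (1/2) * ⟪y - x, Matrix.toEuclideanLin (H + lam • 1) (y - x)⟫) :
    ∀ y, f x + g x ≤ f y + g y := by
  intro y
  set M := Matrix.toEuclideanLin (H + lam • 1) with hM
  set z := y - x with hz
  set C : ℝ := ⟪z, M z⟫ with hC
  -- the quadratic form is nonnegative
  have hCnn : 0 ≤ C := by
    have hMz : M z = Matrix.toEuclideanLin H z + lam • z := by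
      rw [hM, map_add, map_smul]
      have : Matrix.toEuclideanLin (1 : Matrix (Fin n) (Fin n) ℝ) z = z := by
        rw [Matrix.toEuclideanLin_eq_toLin]
        simp
      simp [LinearMap.add_apply, LinearMap.smul_apply, this]
    rw [hC, hMz, inner_add_right, inner_smul_right]
    have h1 := hH z
    have h2 : 0 ≤ ⟪z, z⟫ := real_inner_self_nonneg
    nlinarith
  have key : ∀ t : ℝ, 0 < t → t ≤ 1 → f x + g x ≤ f y + g y + t * (C / 2) := by
    intro t ht ht1
    have hmt := hmin (x + t • z)
    have hsub : x - x = (0 : EuclideanSpace ℝ (Fin n)) := sub_self x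
    rw [hsub] at hmt
    simp only [map_zero, inner_zero_left, mul_zero, add_zero] at hmt
    have hpt : x + t • z - x = t • z := by abel
    rw [hpt] at hmt
    have hinner : ⟪t • z, M (t • z)⟫ = t * t * C := by
      rw [map_smul, inner_smul_left, inner_smul_right, hC]
      simp only [starRingEnd_apply, star_trivial]
      ring
    rw [hinner] at hmt
    have hcomb : x + t • z = (1 - t) • x + t • y := by
      rw [hz]; module
    have hlconv : l (x + t • z) ≤ (1 - t) * l x + t * l y := by
      rw [hcomb]
      exact hl.2 (Set.mem_univ x) (Set.mem_univ y) (by linarith) ht.le (by ring)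
    have hgconv : g (x + t • z) ≤ (1 - t) * g x + t * g y := by
      rw [hcomb]
      exact hg.2 (Set.mem_univ x) (Set.mem_univ y) (by linarith) ht.le (by ring)
    have hstep : t * (l x + g x) ≤ t * (l y + g y) + t * t * C / 2 := by nlinarith
    have hdiv : l x + g x ≤ l y + g y + t * (C / 2) := by
      have := (mul_le_mul_iff_right₀ ht).mp (by nlinarith : t * (l x + g x) ≤ t * ((l y + g y) + t * (C / 2)))
      linarith
    have := hle y
    linarith [htight ▸ hdiv]
  refine le_of_forall_pos_le_add ?_
  intro ε hε
  have ht0 : 0 < min 1 (ε / (C / 2 + 1)) := by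
    apply lt_min one_pos
    positivity
  have h := key _ ht0 (min_le_left _ _)
  have h2 : min 1 (ε / (C / 2 + 1)) * (C / 2) ≤ ε := by
    have hmle : min 1 (ε / (C / 2 + 1)) ≤ ε / (C / 2 + 1) := min_le_right _ _
    have hpos : (0:ℝ) < C / 2 + 1 := by linarith
    calc min 1 (ε / (C / 2 + 1)) * (C / 2) ≤ ε / (C / 2 + 1) * (C / 2) := by
          apply mul_le_mul_of_nonneg_right hmle (by linarith)
      _ ≤ ε := by
          rw [div_mul_eq_mul_div, div_le_iff₀ hpos]
          nlinarith
  linarith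
end

section
/- Assume the tentative-update setting, and additionally that f : ℝⁿ → ℝ is convex and differentiable with l(y) ≤ f(y) for all y ∈ ℝⁿ and l(x) = f(x). If x⁺ = x, then x is a global minimizer of l + g over ℝⁿ, and consequently inf_{y ∈ ℝⁿ} ( l(y) + g(y) ) = f(x) + g(x); i.e., the lower bound obtained by minimizing l + g is tight. -/
open scoped RealInnerProductSpace

/-- Tentative-update setting: if `x⁺ = x`, then `x` globally minimizes `l + g`, and
consequently the lower bound `inf (l + g)` equals `f(x) + g(x)`, i.e. it is tight. -/
theorem stmt_4 (n : ℕ)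
    (l g f : EuclideanSpace ℝ (Fin n) → ℝ)
    (hl : ConvexOn ℝ Set.univ l) (hg : ConvexOn ℝ Set.univ g)
    (H : Matrix (Fin n) (Fin n) ℝ)
    (hH : ∀ z : EuclideanSpace ℝ (Fin n), 0 ≤ ⟪z, Matrix.toEuclideanLin H z⟫)
    (lam : ℝ) (hlam : 0 < lam)
    (x : EuclideanSpace ℝ (Fin n))
    (hf : ConvexOn ℝ Set.univ f) (hfd : Differentiable ℝ f)
    (hle : ∀ y, l y ≤ f y) (htight : l x = f x)
    (hmin : ∀ y,
      l x + g x + (1/2) * ⟪x - x, Matrix.toEuclideanLin (H + lam • 1) (x - x)⟫ ≤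
      l y + g y + (1/2) * ⟪y - x, Matrix.toEuclideanLin (H + lam • 1) (y - x)⟫) :
    (∀ y, l x + g x ≤ l y + g y) ∧ (⨅ y, (l y + g y)) = f x + g x := by
  set M := Matrix.toEuclideanLin (H + lam • 1) with hM
  have hφ : ConvexOn ℝ Set.univ (fun z => l z + g z) := hl.add hg
  have key : ∀ y, l x + g x ≤ l y + g y := by
    intro y
    set C : ℝ := ⟪y - x, M (y - x)⟫ with hC
    have step : ∀ t : ℝ, 0 < t → t ≤ 1 →
        0 ≤ (l y + g y - (l x + g x)) + (1/2) * t * C := by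
      intro t ht ht1
      have h0 : (⟪x - x, M (x - x)⟫ : ℝ) = 0 := by
        simp [sub_self]
      set z := (1 - t) • x + t • y with hz
      have hz' : z - x = t • (y - x) := by
        simp only [hz]; module
      have hq : (⟪z - x, M (z - x)⟫ : ℝ) = t * t * C := by
        rw [hz', map_smul, real_inner_smul_left, real_inner_smul_right, hC]
        ring
      have h1 := hmin z
      rw [h0, hq] at h1
      have h2 : l z + g z ≤ (1 - t) • (l x + g x) + t • (l y + g y) := by
        have := hφ.2 (Set.mem_univ x) (Set.mem_univ y) (by linarith) ht.le
          (by ring : (1 - t) + t = 1)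
        simpa using this
      simp only [smul_eq_mul] at h2
      nlinarith
    by_contra hcon
    push_neg at hcon
    set ε : ℝ := (l x + g x) - (l y + g y) with hε
    have hεpos : 0 < ε := by simp only [hε]; linarith
    rcases le_or_gt C 0 with hC0 | hC0
    · have := step 1 one_pos le_rfl
      nlinarith
    · have ht : 0 < min 1 (ε / C) := lt_min one_pos (div_pos hεpos hC0)
      have := step (min 1 (ε / C)) ht (min_le_left _ _)
      have h3 : min 1 (ε / C) * C ≤ ε := by
        calc min 1 (ε / C) * C ≤ (ε / C) * C :=
              mul_le_mul_of_nonneg_right (min_le_right _ _) hC0.le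
          _ = ε := div_mul_cancel₀ ε hC0.ne'
      nlinarith
  refine ⟨key, le_antisymm ?_ ?_⟩
  · calc (⨅ y, (l y + g y)) ≤ l x + g x := ciInf_le ⟨l x + g x, fun r ⟨y, hy⟩ => hy ▸ key y⟩ x
      _ = f x + g x := by rw [htight]
  · exact le_ciInf fun y => htight ▸ key y
end

section
/- Assume the tentative-update setting with x⁺ ≠ x, and additionally that f : ℝⁿ → ℝ is convex and differentiable with l(y) ≤ f(y) for all y ∈ ℝⁿ and l(x) = f(x). Let h = f + g. Then the one-sided directional derivative h'(x; v) = lim_{t → 0⁺} ( h(x + t v) − h(x) ) / t exists and satisfies h'(x; v) < −(1/2)⟨v, (H + λI)v⟩ < 0; in particular v is a descent direction for h at x. -/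
open scoped RealInnerProductSpace

open Set Filter

private lemma aux_line_convex {n : ℕ} {g : EuclideanSpace ℝ (Fin n) → ℝ}
    (hg : ConvexOn ℝ Set.univ g) (x v : EuclideanSpace ℝ (Fin n)) :
    ConvexOn ℝ Set.univ (fun t : ℝ => g (x + t • v)) := by
  have h := hg.comp_affineMap (AffineMap.lineMap x (x + v))
  have he : (fun t : ℝ => g (x + t • v)) = g ∘ (AffineMap.lineMap x (x + v)) := by
    funext t
    simp [AffineMap.lineMap_apply, add_sub_cancel_left, add_comm]
  rw [he]
  simpa using h

/-- Tentative-update setting with `x⁺ ≠ x`, `l` a convex minorant of the convex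
differentiable `f` tight at `x`, and `h = f + g`: the one-sided directional derivative
`h'(x; v) = lim_{t→0⁺} (h(x + tv) − h(x))/t` exists and satisfies
`h'(x; v) < −(1/2)⟨v, (H + λI)v⟩ < 0`, so `v = x⁺ − x` is a descent direction. -/
theorem stmt_7 (n : ℕ)
    (l g f : EuclideanSpace ℝ (Fin n) → ℝ)
    (hl : ConvexOn ℝ Set.univ l) (hg : ConvexOn ℝ Set.univ g)
    (H : Matrix (Fin n) (Fin n) ℝ)
    (hH : ∀ z : EuclideanSpace ℝ (Fin n), 0 ≤ ⟪z, Matrix.toEuclideanLin H z⟫)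
    (lam : ℝ) (hlam : 0 < lam)
    (x xp : EuclideanSpace ℝ (Fin n))
    (hmin : ∀ y,
      l xp + g xp + (1/2) * ⟪xp - x, Matrix.toEuclideanLin (H + lam • 1) (xp - x)⟫ ≤
      l y + g y + (1/2) * ⟪y - x, Matrix.toEuclideanLin (H + lam • 1) (y - x)⟫)
    (hne : xp ≠ x)
    (hf : ConvexOn ℝ Set.univ f) (hfd : Differentiable ℝ f)
    (hle : ∀ y, l y ≤ f y) (htight : l x = f x) :
    ∃ d : ℝ,
      Filter.Tendsto (fun t : ℝ => ((f + g) (x + t • (xp - x)) - (f + g) x) / t)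
        (nhdsWithin 0 (Set.Ioi 0)) (nhds d) ∧
      d < -(1/2) * ⟪xp - x, Matrix.toEuclideanLin (H + lam • 1) (xp - x)⟫ ∧
      -(1/2) * ⟪xp - x, Matrix.toEuclideanLin (H + lam • 1) (xp - x)⟫ < 0 := by
  set v : EuclideanSpace ℝ (Fin n) := xp - x with hv
  set M : EuclideanSpace ℝ (Fin n) →ₗ[ℝ] EuclideanSpace ℝ (Fin n) :=
    Matrix.toEuclideanLin (H + lam • 1) with hM
  set Q : ℝ := ⟪v, M v⟫ with hQ
  have hvne : v ≠ 0 := sub_ne_zero.mpr hne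
  -- identity matrix acts as identity
  have hone : Matrix.toEuclideanLin (1 : Matrix (Fin n) (Fin n) ℝ) = LinearMap.id := by
    apply LinearMap.ext
    intro z
    rw [Matrix.toEuclideanLin_apply, Matrix.one_mulVec]
    exact (WithLp.equiv _ _).symm_apply_apply z
  have hMz : ∀ z : EuclideanSpace ℝ (Fin n), M z = Matrix.toEuclideanLin H z + lam • z := by
    intro z
    rw [hM, map_add, map_smul, hone]
    rfl
  -- Q > 0
  have hQpos : 0 < Q := by
    have h1 : Q = ⟪v, Matrix.toEuclideanLin H v⟫ + lam * ⟪v, v⟫ := by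
      rw [hQ, hMz v, inner_add_right, real_inner_smul_right]
    have h2 : (0:ℝ) < ⟪v, v⟫ := by
      rw [real_inner_self_eq_norm_sq]
      exact pow_pos (norm_pos_iff.mpr hvne) 2
    have h3 := hH v
    nlinarith
  -- scaling of the quadratic form
  have hQhalf : ⟪(1/2 : ℝ) • v, M ((1/2 : ℝ) • v)⟫ = (1/4) * Q := by
    rw [map_smul, real_inner_smul_left, real_inner_smul_right, hQ]
    ring
  -- key inequality from the minimization property at the midpoint
  have hkey : (l xp + g xp) - (l x + g x) ≤ -(3/4) * Q := by
    have hy := hmin (x + (1/2 : ℝ) • v)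
    have hy1 : x + (1/2 : ℝ) • v - x = (1/2 : ℝ) • v := add_sub_cancel_left x _
    rw [hy1, hQhalf] at hy
    have hmid : x + (1/2 : ℝ) • v = (1/2 : ℝ) • x + (1/2 : ℝ) • xp := by
      rw [hv, smul_sub]
      module
    have hlmid : l (x + (1/2 : ℝ) • v) ≤ (1/2) * l x + (1/2) * l xp := by
      rw [hmid]
      have := hl.2 (Set.mem_univ x) (Set.mem_univ xp)
        (by norm_num : (0:ℝ) ≤ 1/2) (by norm_num : (0:ℝ) ≤ 1/2) (by norm_num)
      simpa [smul_eq_mul] using this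
    have hgmid : g (x + (1/2 : ℝ) • v) ≤ (1/2) * g x + (1/2) * g xp := by
      rw [hmid]
      have := hg.2 (Set.mem_univ x) (Set.mem_univ xp)
        (by norm_num : (0:ℝ) ≤ 1/2) (by norm_num : (0:ℝ) ≤ 1/2) (by norm_num)
      simpa [smul_eq_mul] using this
    linarith
  -- restrictions to the line through x in direction v
  set φf : ℝ → ℝ := fun t => f (x + t • v) with hφf
  set φg : ℝ → ℝ := fun t => g (x + t • v) with hφg
  set φl : ℝ → ℝ := fun t => l (x + t • v) with hφl
  have hφf0 : φf 0 = f x := by simp [hφf]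
  have hφg0 : φg 0 = g x := by simp [hφg]
  have hφl0 : φl 0 = l x := by simp [hφl]
  have hφf1 : φf 1 = f xp := by simp [hφf, hv]
  have hφg1 : φg 1 = g xp := by simp [hφg, hv]
  have hφl1 : φl 1 = l xp := by simp [hφl, hv]
  have hcg : ConvexOn ℝ Set.univ φg := aux_line_convex hg x v
  have hcl : ConvexOn ℝ Set.univ φl := aux_line_convex hl x v
  set qf : ℝ → ℝ := fun t => (φf t - φf 0) / t with hqf
  set qg : ℝ → ℝ := fun t => (φg t - φg 0) / t with hqg
  set ql : ℝ → ℝ := fun t => (φl t - φl 0) / t with hql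
  -- derivative of f along the line
  set D : ℝ := fderiv ℝ f x v with hD
  have hder : HasDerivAt φf D 0 := by
    have h1 : HasDerivAt (fun t : ℝ => x + t • v) v 0 := by
      simpa using ((hasDerivAt_id (0:ℝ)).smul_const v).const_add x
    have h0 : x + (0:ℝ) • v = x := by simp
    have h2 : HasFDerivAt f (fderiv ℝ f x) (x + (0:ℝ) • v) := by
      rw [h0]; exact (hfd x).hasFDerivAt
    exact h2.comp_hasDerivAt 0 h1
  have hslope : qf = slope φf 0 := by
    funext t
    simp [hqf, slope_def_field]
  have hslope_all : Tendsto qf (nhdsWithin 0 {(0:ℝ)}ᶜ) (nhds D) := by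
    rw [hslope]
    exact hasDerivAt_iff_tendsto_slope.mp hder
  have htf_right : Tendsto qf (nhdsWithin 0 (Ioi (0:ℝ))) (nhds D) :=
    hslope_all.mono_left
      (nhdsWithin_mono 0 (fun t ht => Set.mem_compl_singleton_iff.mpr (ne_of_gt ht)))
  have htf_left : Tendsto qf (nhdsWithin 0 (Iio (0:ℝ))) (nhds D) :=
    hslope_all.mono_left
      (nhdsWithin_mono 0 (fun t ht => Set.mem_compl_singleton_iff.mpr (ne_of_lt ht)))
  -- monotone slope of g, its right limit
  have hmono_g : MonotoneOn qg (Ioi (0:ℝ)) := by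
    intro a ha b hb hab
    have := hcg.secant_mono (Set.mem_univ 0) (Set.mem_univ a) (Set.mem_univ b)
      (ne_of_gt ha) (ne_of_gt hb) hab
    simpa [hqg, sub_zero] using this
  have hbdd : BddBelow (qg '' Ioi (0:ℝ)) := by
    refine ⟨qg (-1), ?_⟩
    rintro r ⟨t, ht, rfl⟩
    have ht' : (0:ℝ) < t := ht
    have := hcg.secant_mono (Set.mem_univ 0) (Set.mem_univ (-1)) (Set.mem_univ t)
      (by norm_num) (ne_of_gt ht') (by linarith)
    simpa [hqg, sub_zero] using this
  set dg : ℝ := sInf (qg '' Ioi (0:ℝ)) with hdg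
  have htg : Tendsto qg (nhdsWithin 0 (Ioi (0:ℝ))) (nhds dg) :=
    hmono_g.tendsto_nhdsGT hbdd
  have hdg_le : dg ≤ qg 1 := csInf_le hbdd ⟨1, by norm_num, rfl⟩
  -- D ≤ ql 1
  have hD_le : D ≤ ql 1 := by
    refine le_of_tendsto htf_left ?_
    refine eventually_nhdsWithin_of_forall (fun s hs => ?_)
    have hs' : s < 0 := hs
    have h1 : φl s - φl 0 ≤ φf s - φf 0 := by
      have := hle (x + s • v)
      rw [hφf0, hφl0, htight]
      simp only [hφf, hφl]
      linarith
    have h2 : qf s ≤ ql s := div_le_div_of_nonpos_of_le (le_of_lt hs') h1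
    have h3 : ql s ≤ ql 1 := by
      have := hcl.secant_mono (Set.mem_univ 0) (Set.mem_univ s) (Set.mem_univ 1)
        (ne_of_lt hs') (by norm_num) (by linarith)
      simpa [hql, sub_zero] using this
    linarith
  -- conclusion
  refine ⟨D + dg, ?_, ?_, ?_⟩
  · have hfun : (fun t : ℝ => ((f + g) (x + t • v) - (f + g) x) / t)
        = fun t => qf t + qg t := by
      funext t
      simp only [Pi.add_apply, hqf, hqg, hφf0, hφg0, hφf, hφg]
      rw [← add_div]
      congr 1
      simp only [zero_smul, add_zero]
      ring
    rw [hfun]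
    exact htf_right.add htg
  · have hql1 : ql 1 = l xp - l x := by simp [hql, hφl1, hφl0]
    have hqg1 : qg 1 = g xp - g x := by simp [hqg, hφg1, hφg0]
    rw [hql1] at hD_le
    rw [hqg1] at hdg_le
    linarith
  · linarith
end

section
/- Assume the tentative-update setting with x⁺ ≠ x, and additionally that f : ℝⁿ → ℝ is convex and differentiable with l(y) ≤ f(y) for all y ∈ ℝⁿ and l(x) = f(x). Then ⟨∇f(x), v⟩ + g(x⁺) − g(x) < −(1/2)⟨v, (H + λI)v⟩; that is, the derivative at t = 0 of the line-search surrogate φ(t) = f(x + t v) + t g(x⁺) + (1 − t) g(x) is strictly less than −(1/2)⟨v, (H + λI)v⟩. -/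
open scoped RealInnerProductSpace

/-- Tentative-update setting with `x⁺ ≠ x`, `l` a convex minorant of the convex
differentiable `f` tight at `x`: the derivative at `t = 0` of the line-search surrogate
`φ(t) = f(x + tv) + t g(x⁺) + (1 − t) g(x)`, namely `⟨∇f(x), v⟩ + g(x⁺) − g(x)`,
is strictly less than `−(1/2)⟨v, (H + λI)v⟩`. -/
theorem stmt_8 (n : ℕ)
    (l g f : EuclideanSpace ℝ (Fin n) → ℝ)
    (hl : ConvexOn ℝ Set.univ l) (hg : ConvexOn ℝ Set.univ g)
    (H : Matrix (Fin n) (Fin n) ℝ)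
    (hH : ∀ z : EuclideanSpace ℝ (Fin n), 0 ≤ ⟪z, Matrix.toEuclideanLin H z⟫)
    (lam : ℝ) (hlam : 0 < lam)
    (x xp : EuclideanSpace ℝ (Fin n))
    (hmin : ∀ y,
      l xp + g xp + (1/2) * ⟪xp - x, Matrix.toEuclideanLin (H + lam • 1) (xp - x)⟫ ≤
      l y + g y + (1/2) * ⟪y - x, Matrix.toEuclideanLin (H + lam • 1) (y - x)⟫)
    (hne : xp ≠ x)
    (hf : ConvexOn ℝ Set.univ f) (hfd : Differentiable ℝ f)
    (hle : ∀ y, l y ≤ f y) (htight : l x = f x) :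
    ⟪gradient f x, xp - x⟫ + g xp - g x <
      -(1/2) * ⟪xp - x, Matrix.toEuclideanLin (H + lam • 1) (xp - x)⟫ := by
  set v : EuclideanSpace ℝ (Fin n) := xp - x with hv
  set A := Matrix.toEuclideanLin (H + lam • 1) with hA
  set Q : ℝ := ⟪v, A v⟫ with hQ
  have hvne : v ≠ 0 := sub_ne_zero.mpr hne
  have hAv : ∀ w : EuclideanSpace ℝ (Fin n),
      A w = Matrix.toEuclideanLin H w + lam • w := by
    intro w
    rw [hA, map_add]
    congr 1
    apply (WithLp.equiv 2 _).injective
    simp [Matrix.piLp_ofLp_toEuclideanLin, Matrix.smul_mulVec, Matrix.one_mulVec]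
  have hQpos : 0 < Q := by
    have h2 : ⟪v, lam • v⟫ = lam * ‖v‖ ^ 2 := by
      rw [real_inner_smul_right, real_inner_self_eq_norm_sq]
    have hQe : Q = ⟪v, Matrix.toEuclideanLin H v⟫ + lam * ‖v‖ ^ 2 := by
      rw [hQ, hAv, inner_add_right, h2]
    rw [hQe]
    have hn : 0 < ‖v‖ := norm_pos_iff.mpr hvne
    have hpos : 0 < lam * ‖v‖ ^ 2 := by positivity
    linarith [hH v]
  have hmid : l xp + g xp + (3/4) * Q ≤ l x + g x := by
    have hy := hmin (x + (1/2 : ℝ) • v)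
    have he : x + (1/2 : ℝ) • v - x = (1/2 : ℝ) • v := by abel
    have hq : ⟪(1/2 : ℝ) • v, A ((1/2 : ℝ) • v)⟫ = (1/4) * Q := by
      rw [map_smul, real_inner_smul_left, real_inner_smul_right]
      rw [hQ]; ring
    rw [he, hq] at hy
    have hconv : x + (1/2 : ℝ) • v = (1/2 : ℝ) • x + (1/2 : ℝ) • xp := by
      rw [hv]; module
    have hlm : l (x + (1/2 : ℝ) • v) ≤ (1/2) * l x + (1/2) * l xp := by
      rw [hconv]
      simpa using hl.2 (Set.mem_univ x) (Set.mem_univ xp)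
        (by norm_num : (0:ℝ) ≤ 1/2) (by norm_num : (0:ℝ) ≤ 1/2) (by norm_num)
    have hgm : g (x + (1/2 : ℝ) • v) ≤ (1/2) * g x + (1/2) * g xp := by
      rw [hconv]
      simpa using hg.2 (Set.mem_univ x) (Set.mem_univ xp)
        (by norm_num : (0:ℝ) ≤ 1/2) (by norm_num : (0:ℝ) ≤ 1/2) (by norm_num)
    linarith
  have hgrad : ⟪gradient f x, v⟫ ≤ l xp - l x := by
    set c : ℝ → ℝ := fun t => f (x + t • v) with hc
    have hline : HasDerivAt (fun t : ℝ => x + t • v) v 0 := by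
      simpa using ((hasDerivAt_id (0:ℝ)).smul_const v).const_add x
    have hfx : HasFDerivAt f (InnerProductSpace.toDual ℝ _ (gradient f x)) x :=
      (hfd x).hasGradientAt
    have h0 : x = x + (0:ℝ) • v := by simp
    rw [h0] at hfx
    have hcd : HasDerivAt c ⟪gradient f x, v⟫ 0 := by
      have := hfx.comp_hasDerivAt (0:ℝ) hline
      simpa [hc, InnerProductSpace.toDual_apply_apply, Function.comp_def] using this
    have hT : Filter.Tendsto (slope c 0) (nhdsWithin 0 (Set.Iio 0)) (nhds ⟪gradient f x, v⟫) :=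
      (hasDerivAt_iff_tendsto_slope.mp hcd).mono_left
        (nhdsWithin_mono 0 (fun s hs => ne_of_lt hs))
    refine le_of_tendsto hT ?_
    filter_upwards [self_mem_nhdsWithin] with s hs
    have hs0 : s < 0 := hs
    have ht0 : 0 < -s := by linarith
    have h1t : (0:ℝ) < 1 + -s := by linarith
    have h1ne : (1 + -s : ℝ) ≠ 0 := ne_of_gt h1t
    have hcomb : ((-s)/(1 + -s)) • xp + (1/(1 + -s)) • (x - (-s) • v) = x := by
      rw [hv]
      match_scalars <;> (field_simp; try ring)
    have hlx : l x ≤ ((-s)/(1 + -s)) * l xp + (1/(1 + -s)) * l (x - (-s) • v) := by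
      have h := hl.2 (Set.mem_univ xp) (Set.mem_univ (x - (-s) • v))
        (le_of_lt (div_pos ht0 h1t)) (le_of_lt (div_pos one_pos h1t))
        (by field_simp; ring)
      rw [hcomb] at h
      simpa using h
    have hfl : l (x - (-s) • v) ≤ f (x - (-s) • v) := hle _
    have hlx2 : l x ≤ ((-s)/(1 + -s)) * l xp + (1/(1 + -s)) * f (x - (-s) • v) := by
      have := mul_le_mul_of_nonneg_left hfl (le_of_lt (div_pos one_pos h1t))
      linarith
    have h1 : (1 + -s) * l x ≤ (-s) * l xp + f (x - (-s) • v) := by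
      have h2 := mul_le_mul_of_nonneg_left hlx2 (le_of_lt h1t)
      have e1 : (1 + -s) * (((-s)/(1 + -s)) * l xp + (1/(1 + -s)) * f (x - (-s) • v))
          = (-s) * l xp + f (x - (-s) • v) := by field_simp
      linarith [e1 ▸ h2]
    have hkey : f x + (-s) * (l x - l xp) ≤ f (x - (-s) • v) := by
      have h2 : (1 + -s) * l x = l x + (-s) * l x := by ring
      have h3 : (-s) * (l x - l xp) = (-s) * l x - (-s) * l xp := by ring
      rw [← htight]
      linarith
    have hxs : x + s • v = x - (-s) • v := by module
    have hcs : c s = f (x - (-s) • v) := by rw [hc]; simp only; rw [hxs]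
    have hc0 : c 0 = f x := by rw [hc]; simp
    rw [slope_def_field, hcs, hc0, sub_zero]
    rw [div_le_iff_of_neg hs0]
    have h4 : (l xp - l x) * s = (-s) * (l x - l xp) := by ring
    linarith
  linarith
end

section
/- Assume the tentative-update setting with x⁺ ≠ x, and additionally that f : ℝⁿ → ℝ is convex and differentiable with an L-Lipschitz gradient (L > 0), l(y) ≤ f(y) for all y ∈ ℝⁿ, and l(x) = f(x). Let α ∈ (0,1) and let t ∈ (0,1] satisfy t ≤ (1 − α)λ / (2L). Then f(x + t v) + t g(x⁺) + (1 − t) g(x) ≤ f(x) + g(x) − (α t / 2)⟨v, (H + λI)v⟩; i.e., the Armijo line-search condition holds at step size t. -/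
open scoped RealInnerProductSpace

lemma grad_ineq {n : ℕ} (f : EuclideanSpace ℝ (Fin n) → ℝ)
    (hf : ConvexOn ℝ Set.univ f) (hfd : Differentiable ℝ f)
    (a b : EuclideanSpace ℝ (Fin n)) :
    f a + ⟪gradient f a, b - a⟫ ≤ f b := by
  set φ : ℝ → ℝ := fun s => f (a + s • (b - a)) with hφ
  have hconv : ConvexOn ℝ Set.univ φ := by
    have h := hf.comp_affineMap (AffineMap.lineMap a b : ℝ →ᵃ[ℝ] EuclideanSpace ℝ (Fin n))
    simp only [Set.preimage_univ] at h
    convert h using 1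
    · rfl
    · rfl
    · rfl
    · rfl
    funext r
    simp only [hφ, Function.comp, AffineMap.lineMap_apply_module]
    congr 1
    module
  have hc : HasDerivAt (fun s : ℝ => a + s • (b - a)) (b - a) 0 := by
    simpa using ((hasDerivAt_id (0:ℝ)).smul_const (b - a)).const_add a
  have hF : HasFDerivAt f (InnerProductSpace.toDual ℝ _ (gradient f a)) (a + (0:ℝ) • (b - a)) := by
    simpa using ((hfd a).hasGradientAt).hasFDerivAt
  have hd : HasDerivAt φ ⟪gradient f a, b - a⟫ 0 := by
    have h := hF.comp_hasDerivAt 0 hc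
    rw [InnerProductSpace.toDual_apply_apply] at h
    exact h
  have h2 := hconv.le_slope_of_hasDerivAt (Set.mem_univ (0:ℝ)) (Set.mem_univ (1:ℝ)) zero_lt_one hd
  rw [slope_def_field] at h2
  have hφ0 : φ 0 = f a := by simp [hφ]
  have hφ1 : φ 1 = f b := by simp [hφ]
  rw [hφ0, hφ1] at h2
  linarith [h2]

/-- Tentative-update setting with `x⁺ ≠ x`, `l` a convex minorant of the convex
differentiable `f` tight at `x`, with `∇f` L-Lipschitz: any step size
`t ∈ (0,1]` with `t ≤ (1 − α)λ/(2L)` satisfies the Armijo line-search condition. -/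
theorem stmt_10 (n : ℕ)
    (l g f : EuclideanSpace ℝ (Fin n) → ℝ)
    (hl : ConvexOn ℝ Set.univ l) (hg : ConvexOn ℝ Set.univ g)
    (H : Matrix (Fin n) (Fin n) ℝ)
    (hH : ∀ z : EuclideanSpace ℝ (Fin n), 0 ≤ ⟪z, Matrix.toEuclideanLin H z⟫)
    (lam : ℝ) (hlam : 0 < lam)
    (x xp : EuclideanSpace ℝ (Fin n))
    (hmin : ∀ y,
      l xp + g xp + (1/2) * ⟪xp - x, Matrix.toEuclideanLin (H + lam • 1) (xp - x)⟫ ≤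
      l y + g y + (1/2) * ⟪y - x, Matrix.toEuclideanLin (H + lam • 1) (y - x)⟫)
    (hne : xp ≠ x)
    (hf : ConvexOn ℝ Set.univ f) (hfd : Differentiable ℝ f)
    (L : ℝ) (hL : 0 < L)
    (hLip : ∀ y z, ‖gradient f y - gradient f z‖ ≤ L * ‖y - z‖)
    (hle : ∀ y, l y ≤ f y) (htight : l x = f x)
    (α : ℝ) (hα : α ∈ Set.Ioo (0:ℝ) 1)
    (t : ℝ) (ht : t ∈ Set.Ioc (0:ℝ) 1) (htle : t ≤ (1 - α) * lam / (2 * L)) :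
    f (x + t • (xp - x)) + t * g xp + (1 - t) * g x ≤
      f x + g x - (α * t / 2) * ⟪xp - x, Matrix.toEuclideanLin (H + lam • 1) (xp - x)⟫ := by
  set v := xp - x with hv
  set D := ⟪gradient f x, v⟫ with hD
  set N := ‖v‖ ^ 2 with hN
  -- quadratic form decomposition
  have hquad : ∀ z : EuclideanSpace ℝ (Fin n),
      ⟪z, Matrix.toEuclideanLin (H + lam • 1) z⟫ =
        ⟪z, Matrix.toEuclideanLin H z⟫ + lam * ‖z‖ ^ 2 := by
    intro z
    have h1 : Matrix.toEuclideanLin (H + lam • (1 : Matrix (Fin n) (Fin n) ℝ)) z =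
        Matrix.toEuclideanLin H z + lam • z := by
      rw [map_add, map_smul]
      congr 1
      simp [Matrix.toEuclideanLin_apply, Matrix.one_mulVec]
    rw [h1, inner_add_right, real_inner_smul_right, real_inner_self_eq_norm_sq]
  -- weak descent lemma
  have hdesc : ∀ a b : EuclideanSpace ℝ (Fin n),
      f b ≤ f a + ⟪gradient f a, b - a⟫ + L * ‖b - a‖ ^ 2 := by
    intro a b
    have h1 := grad_ineq f hf hfd b a
    have h2 : ⟪gradient f b, a - b⟫ = - ⟪gradient f b, b - a⟫ := by
      rw [← inner_neg_right]; congr 1; abel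
    have h3 : ⟪gradient f b - gradient f a, b - a⟫ ≤ L * ‖b - a‖ ^ 2 := by
      calc ⟪gradient f b - gradient f a, b - a⟫ ≤ ‖gradient f b - gradient f a‖ * ‖b - a‖ :=
            real_inner_le_norm _ _
        _ ≤ (L * ‖b - a‖) * ‖b - a‖ :=
            mul_le_mul_of_nonneg_right (hLip b a) (norm_nonneg _)
        _ = L * ‖b - a‖ ^ 2 := by ring
    have h4 : ⟪gradient f b - gradient f a, b - a⟫ =
        ⟪gradient f b, b - a⟫ - ⟪gradient f a, b - a⟫ := inner_sub_left _ _ _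
    rw [h2] at h1
    linarith
  -- D ≤ l xp - l x
  have hDle : D ≤ l xp - l x := by
    refine le_of_forall_pos_le_add fun ε hε => ?_
    set s : ℝ := -(ε / (L * N + 1)) with hs
    have hLN : 0 < L * N + 1 := by positivity
    have hsneg : s < 0 := by
      rw [hs]; simp only [neg_neg, neg_lt, neg_zero]; positivity
    set φ : ℝ → ℝ := fun r => l (x + r • v) with hφ
    have hconv : ConvexOn ℝ Set.univ φ := by
      have := hl.comp_affineMap
        ((AffineMap.lineMap x xp : ℝ →ᵃ[ℝ] EuclideanSpace ℝ (Fin n)))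
      simp only [Set.preimage_univ] at this
      convert this using 1
      · rfl
      · rfl
      · rfl
      · rfl
      funext r
      simp [hφ, AffineMap.lineMap_apply_module', Function.comp, hv, add_comm]
    have hslope := hconv.slope_mono_adjacent (Set.mem_univ s) (Set.mem_univ (1:ℝ))
      hsneg zero_lt_one
    have hφ0 : φ 0 = f x := by simp [hφ, htight]
    have hφ1 : φ 1 = l xp := by simp [hφ, hv]
    have hφs : φ s ≤ f x + s * D + L * s ^ 2 * N := by
      have h1 : l (x + s • v) ≤ f (x + s • v) := hle _
      have h2 := hdesc x (x + s • v)
      have h3 : (x + s • v) - x = s • v := by abel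
      rw [h3, real_inner_smul_right, norm_smul, mul_pow] at h2
      rw [Real.norm_eq_abs, sq_abs, ← hD, ← hN] at h2
      calc φ s ≤ f (x + s • v) := h1
        _ ≤ f x + s * D + L * s ^ 2 * N := by linarith [h2]
    -- from hslope: (φ 0 - φ s)/(0 - s) ≤ (φ 1 - φ 0)/(1 - 0)
    have hkey : D + L * s * N ≤ l xp - l x := by
      have hden : (0:ℝ) < -s := by linarith
      rw [hφ0, hφ1] at hslope
      have h5 : (f x - φ s) / (0 - s) ≤ (l xp - f x) / (1 - 0) := hslope
      have h6 : (0:ℝ) - s = -s := by ring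
      rw [h6, div_le_iff₀ hden] at h5
      have h7 : (l xp - f x) / (1 - 0) = l xp - f x := by ring
      rw [h7] at h5
      have h8 : (-s) * (D + L * s * N) ≤ (-s) * (l xp - f x) := by nlinarith [h5, hφs]
      have h9 := (mul_le_mul_iff_of_pos_left hden).mp h8
      rw [htight]
      linarith [h9]
    have hsLN : -(s) * (L * N) ≤ ε := by
      rw [hs, neg_neg, div_mul_eq_mul_div, div_le_iff₀ hLN]
      nlinarith [hε.le]
    linarith [hkey, hsLN]
  -- hmin at y = x
  have hminx : l xp + g xp + (1/2) * ⟪v, Matrix.toEuclideanLin (H + lam • 1) v⟫ ≤ f x + g x := by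
    have := hmin x
    simp only [sub_self, map_zero, inner_zero_left, mul_zero, add_zero] at this
    rw [htight] at this
    exact this
  set q := ⟪v, Matrix.toEuclideanLin (H + lam • 1) v⟫ with hq
  have hqlam : lam * N ≤ q := by
    rw [hq, hquad v, hN]
    linarith [hH v]
  have hqpos : 0 ≤ q := le_trans (by positivity) hqlam
  have hcomb : D + g xp - g x ≤ - (q / 2) := by linarith
  -- descent at step t
  have hft := hdesc x (x + t • v)
  have h3 : (x + t • v) - x = t • v := by abel
  rw [h3, real_inner_smul_right, norm_smul, mul_pow] at hft
  have hfts : f (x + t • v) ≤ f x + t * D + L * t ^ 2 * N := by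
    rw [Real.norm_eq_abs, sq_abs, ← hD, ← hN] at hft
    linarith [hft]
  obtain ⟨ht0, ht1⟩ := ht
  obtain ⟨hα0, hα1⟩ := hα
  have hLtN : L * t * N ≤ (1 - α) * q / 2 := by
    have h1 : 2 * L * t ≤ (1 - α) * lam := by
      rw [le_div_iff₀ (by positivity : (0:ℝ) < 2 * L)] at htle
      linarith
    have hN0 : (0:ℝ) ≤ N := by positivity
    have a1 : L * t * N ≤ ((1 - α) * lam / 2) * N :=
      mul_le_mul_of_nonneg_right (by linarith) hN0
    have a2 : (1 - α) * (lam * N) ≤ (1 - α) * q :=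
      mul_le_mul_of_nonneg_left hqlam (by linarith)
    linarith [a1, a2]
  have e1 : t * (D + g xp - g x) ≤ t * (-(q / 2)) :=
    mul_le_mul_of_nonneg_left hcomb ht0.le
  have e2 : t * (L * t * N) ≤ t * ((1 - α) * q / 2) :=
    mul_le_mul_of_nonneg_left hLtN ht0.le
  calc f (x + t • v) + t * g xp + (1 - t) * g x
      ≤ (f x + t * D + L * t ^ 2 * N) + t * g xp + (1 - t) * g x := by linarith [hfts]
    _ = f x + g x + t * (D + g xp - g x) + t * (L * t * N) := by ring
    _ ≤ f x + g x + t * (-(q / 2)) + t * ((1 - α) * q / 2) := by linarith [e1, e2]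
    _ = f x + g x - α * t / 2 * q := by ring
end

section
/- Let h : ℝⁿ → ℝ be bounded below, let α ∈ (0,1), t_min > 0, λ_min > 0, and let (xᵏ), (vᵏ) be sequences in ℝⁿ, (Hₖ) a sequence of n×n positive semidefinite matrices, (λₖ) a sequence with λₖ ≥ λ_min, and (tₖ) a sequence with tₖ ∈ [t_min, 1]. If h(x^{k+1}) − h(xᵏ) ≤ −(α tₖ / 2)⟨vᵏ, (Hₖ + λₖ I)vᵏ⟩ for every k ≥ 0, then vᵏ → 0 as k → ∞, and the sequence h(xᵏ) converges. -/
open scoped RealInnerProductSpace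

/-- If `h` is bounded below and each step of the descent method satisfies the Armijo-type
decrease `h(x^{k+1}) − h(xᵏ) ≤ −(α tₖ/2)⟨vᵏ, (Hₖ + λₖ I)vᵏ⟩` with `tₖ ∈ [t_min, 1]` and
`λₖ ≥ λ_min > 0`, then `vᵏ → 0` and `h(xᵏ)` converges. -/
theorem stmt_13 (nn : ℕ) (h : EuclideanSpace ℝ (Fin nn) → ℝ)
    (hbdd : ∃ B : ℝ, ∀ y, B ≤ h y)
    (α : ℝ) (hα : α ∈ Set.Ioo (0:ℝ) 1)
    (tmin : ℝ) (htmin : 0 < tmin)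
    (lammin : ℝ) (hlammin : 0 < lammin)
    (x v : ℕ → EuclideanSpace ℝ (Fin nn))
    (Hs : ℕ → Matrix (Fin nn) (Fin nn) ℝ)
    (hHs : ∀ k, ∀ z : EuclideanSpace ℝ (Fin nn), 0 ≤ ⟪z, Matrix.toEuclideanLin (Hs k) z⟫)
    (lam : ℕ → ℝ) (hlam : ∀ k, lammin ≤ lam k)
    (t : ℕ → ℝ) (ht : ∀ k, t k ∈ Set.Icc tmin 1)
    (hdec : ∀ k : ℕ, h (x (k+1)) - h (x k) ≤
      -(α * t k / 2) * ⟪v k, Matrix.toEuclideanLin (Hs k + lam k • 1) (v k)⟫) :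
    Filter.Tendsto v Filter.atTop (nhds 0) ∧
    ∃ c : ℝ, Filter.Tendsto (fun k => h (x k)) Filter.atTop (nhds c) := by
  obtain ⟨B, hB⟩ := hbdd
  obtain ⟨hα0, hα1⟩ := hα
  -- decompose the quadratic form
  have hid : ∀ k, ⟪v k, Matrix.toEuclideanLin (Hs k + lam k • 1) (v k)⟫
      = ⟪v k, Matrix.toEuclideanLin (Hs k) (v k)⟫ + lam k * ‖v k‖^2 := by
    intro k
    have h1 : Matrix.toEuclideanLin (1 : Matrix (Fin nn) (Fin nn) ℝ) (v k) = v k := by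
      simp [Matrix.toEuclideanLin_eq_toLin]
    rw [map_add, map_smul, LinearMap.add_apply, LinearMap.smul_apply, inner_add_right,
      inner_smul_right, h1, real_inner_self_eq_norm_sq]
  have hQ : ∀ k, lammin * ‖v k‖^2 ≤ ⟪v k, Matrix.toEuclideanLin (Hs k + lam k • 1) (v k)⟫ := by
    intro k
    rw [hid k]
    have := hHs k (v k)
    nlinarith [hlam k, sq_nonneg ‖v k‖]
  have hQ0 : ∀ k, (0:ℝ) ≤ ⟪v k, Matrix.toEuclideanLin (Hs k + lam k • 1) (v k)⟫ := by
    intro k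
    exact le_trans (by positivity) (hQ k)
  -- key inequality
  have key : ∀ k, (α * tmin / 2) * (lammin * ‖v k‖^2) ≤ h (x k) - h (x (k+1)) := by
    intro k
    have h1 : (α * tmin / 2) * (lammin * ‖v k‖^2)
        ≤ (α * t k / 2) * ⟪v k, Matrix.toEuclideanLin (Hs k + lam k • 1) (v k)⟫ := by
      apply mul_le_mul
      · have := (ht k).1
        nlinarith
      · exact hQ k
      · positivity
      · have := (ht k).1
        nlinarith
    have h2 := hdec k
    linarith
  -- h (x k) is antitone and bounded below, hence converges
  have hanti : Antitone (fun k => h (x k)) := by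
    apply antitone_nat_of_succ_le
    intro k
    have h0 : (0:ℝ) ≤ α * tmin / 2 * (lammin * ‖v k‖^2) := by positivity
    linarith [key k]
  have hbdd' : BddBelow (Set.range fun k => h (x k)) := ⟨B, by rintro y ⟨k, rfl⟩; exact hB _⟩
  have hconv : Filter.Tendsto (fun k => h (x k)) Filter.atTop
      (nhds (⨅ k, h (x k))) := tendsto_atTop_ciInf hanti hbdd'
  refine ⟨?_, ⟨_, hconv⟩⟩
  -- differences tend to 0
  have hdiff : Filter.Tendsto (fun k => h (x k) - h (x (k+1))) Filter.atTop (nhds 0) := by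
    have h2 : Filter.Tendsto (fun k => h (x (k+1))) Filter.atTop (nhds (⨅ k, h (x k))) :=
      hconv.comp (Filter.tendsto_add_atTop_nat 1)
    simpa using hconv.sub h2
  -- squeeze: ‖v k‖^2 → 0
  have hc : 0 < α * tmin / 2 * lammin := by positivity
  have hsq : Filter.Tendsto (fun k => ‖v k‖^2) Filter.atTop (nhds 0) := by
    have hsl : Filter.Tendsto (fun k => (h (x k) - h (x (k+1))) / (α * tmin / 2 * lammin))
        Filter.atTop (nhds 0) := by
      simpa using hdiff.div_const (α * tmin / 2 * lammin)
    apply squeeze_zero (fun k => sq_nonneg _) _ hsl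
    intro k
    rw [le_div_iff₀ hc]
    calc ‖v k‖^2 * (α * tmin / 2 * lammin) = (α * tmin / 2) * (lammin * ‖v k‖^2) := by ring
    _ ≤ _ := key k
  -- conclude v → 0
  rw [tendsto_zero_iff_norm_tendsto_zero]
  have : Filter.Tendsto (fun k => Real.sqrt (‖v k‖^2)) Filter.atTop (nhds (Real.sqrt 0)) :=
    Real.continuous_sqrt.continuousAt.tendsto.comp hsq
  simpa [Real.sqrt_sq (norm_nonneg _)] using this
end

section
/- Let f : ℝⁿ → ℝ be convex and differentiable with an L-Lipschitz gradient (L > 0), let M ≥ 1 be an integer, let k ≥ 0, set m = max{0, k − M + 1}, and let x⁰, x¹, …, x^{k+1} ∈ ℝⁿ. Define l(x) = max_{i=m,…,k} ( f(xⁱ) + ⟨∇f(xⁱ), x − xⁱ⟩ ). Then every subgradient s of l at x^{k+1} satisfies ‖∇f(x^{k+1}) − s‖ ≤ L · M · max_{j=m,…,k} ‖x^{j+1} − xʲ‖. -/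
open scoped RealInnerProductSpace

/-- Accuracy of the limited-memory piecewise affine minorant: with
`m = max{0, k − M + 1}` and `l(x) = max_{i=m,…,k} ( f(xⁱ) + ⟨∇f(xⁱ), x − xⁱ⟩ )`,
every subgradient `s` of `l` at `x^{k+1}` satisfies
`‖∇f(x^{k+1}) − s‖ ≤ L · M · max_{j=m,…,k} ‖x^{j+1} − xʲ‖`. -/
theorem stmt_16 (n : ℕ)
    (f : EuclideanSpace ℝ (Fin n) → ℝ)
    (hf : ConvexOn ℝ Set.univ f) (hfd : Differentiable ℝ f)
    (L : ℝ) (hL : 0 < L)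
    (hLip : ∀ y z, ‖gradient f y - gradient f z‖ ≤ L * ‖y - z‖)
    (M : ℕ) (hM : 1 ≤ M) (k : ℕ)
    (xs : ℕ → EuclideanSpace ℝ (Fin n))
    (s : EuclideanSpace ℝ (Fin n))
    (hs : ∀ y,
      ((Finset.Icc (k + 1 - M) k).sup' (Finset.nonempty_Icc.mpr (by omega))
        fun i => f (xs i) + ⟪gradient f (xs i), xs (k+1) - xs i⟫) + ⟪s, y - xs (k+1)⟫ ≤
      ((Finset.Icc (k + 1 - M) k).sup' (Finset.nonempty_Icc.mpr (by omega))
        fun i => f (xs i) + ⟪gradient f (xs i), y - xs i⟫)) :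
    ‖gradient f (xs (k+1)) - s‖ ≤
      L * M * ((Finset.Icc (k + 1 - M) k).sup' (Finset.nonempty_Icc.mpr (by omega))
        fun j => ‖xs (j+1) - xs j‖) := by
  have hne : (Finset.Icc (k + 1 - M) k).Nonempty := Finset.nonempty_Icc.mpr (by omega)
  set g : EuclideanSpace ℝ (Fin n) := gradient f (xs (k+1)) with hg
  set v : EuclideanSpace ℝ (Fin n) := g - s with hv
  set D : ℝ := (Finset.Icc (k + 1 - M) k).sup' hne (fun j => ‖xs (j+1) - xs j‖) with hD
  have hmk : k + 1 - M ≤ k := by omega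
  have hD0 : (0:ℝ) ≤ D := by
    refine le_trans (norm_nonneg (xs (k + 1 - M + 1) - xs (k + 1 - M))) ?_
    exact Finset.le_sup' (fun j => ‖xs (j+1) - xs j‖) (Finset.mem_Icc.mpr ⟨le_rfl, hmk⟩)
  -- pick the index minimizing ⟪∇f(xᵢ), v⟫
  obtain ⟨i₀, hi₀mem, hi₀⟩ := Finset.exists_mem_eq_inf' hne
    (fun i => ⟪gradient f (xs i), v⟫)
  obtain ⟨hm1, hm2⟩ := Finset.mem_Icc.mp hi₀mem
  set S : ℝ := (Finset.Icc (k + 1 - M) k).sup' hne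
    (fun i => f (xs i) + ⟪gradient f (xs i), xs (k+1) - xs i⟫) with hS
  set y : EuclideanSpace ℝ (Fin n) := xs (k+1) - v with hy
  -- the subgradient inequality at y
  have h1 : S + ⟪s, y - xs (k+1)⟫ ≤ (Finset.Icc (k + 1 - M) k).sup' hne
      (fun i => f (xs i) + ⟪gradient f (xs i), y - xs i⟫) := hs y
  have hyv : y - xs (k+1) = -v := by rw [hy]; abel
  rw [hyv, inner_neg_right] at h1
  have hT : (Finset.Icc (k + 1 - M) k).sup' hne
      (fun i => f (xs i) + ⟪gradient f (xs i), y - xs i⟫) ≤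
      S - ⟪gradient f (xs i₀), v⟫ := by
    apply Finset.sup'_le
    intro i hi
    have e1 : y - xs i = (xs (k+1) - xs i) - v := by rw [hy]; abel
    rw [e1, inner_sub_right]
    have e2 : f (xs i) + ⟪gradient f (xs i), xs (k+1) - xs i⟫ ≤ S :=
      Finset.le_sup' (fun i => f (xs i) + ⟪gradient f (xs i), xs (k+1) - xs i⟫) hi
    have e3 : ⟪gradient f (xs i₀), v⟫ ≤ ⟪gradient f (xs i), v⟫ := by
      rw [← hi₀]; exact Finset.inf'_le _ hi
    linarith
  have key : ⟪gradient f (xs i₀), v⟫ ≤ ⟪s, v⟫ := by linarith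
  -- distance bound via telescoping
  have hcd : k + 1 - i₀ ≤ M := by omega
  have tele : xs (k+1) - xs i₀ = ∑ j ∈ Finset.Ico i₀ (k+1), (xs (j+1) - xs j) := by
    rw [Finset.sum_Ico_eq_sub _ (by omega : i₀ ≤ k + 1), Finset.sum_range_sub,
      Finset.sum_range_sub]
    abel
  have hdist : ‖xs (k+1) - xs i₀‖ ≤ (M : ℝ) * D := by
    rw [tele]
    calc ‖∑ j ∈ Finset.Ico i₀ (k+1), (xs (j+1) - xs j)‖
        ≤ ∑ j ∈ Finset.Ico i₀ (k+1), ‖xs (j+1) - xs j‖ := norm_sum_le _ _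
      _ ≤ (Finset.Ico i₀ (k+1)).card • D := by
          apply Finset.sum_le_card_nsmul
          intro j hj
          obtain ⟨hj1, hj2⟩ := Finset.mem_Ico.mp hj
          exact Finset.le_sup' (fun j => ‖xs (j+1) - xs j‖)
            (Finset.mem_Icc.mpr ⟨by omega, by omega⟩)
      _ = ((k + 1 - i₀ : ℕ) : ℝ) * D := by rw [Nat.card_Ico, nsmul_eq_mul]
      _ ≤ (M : ℝ) * D := by
          apply mul_le_mul_of_nonneg_right _ hD0
          exact_mod_cast hcd
  have hB : ‖g - gradient f (xs i₀)‖ ≤ L * ((M : ℝ) * D) :=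
    le_trans (hLip (xs (k+1)) (xs i₀)) (by nlinarith [hdist])
  -- put it together
  have h2 : ‖v‖ * ‖v‖ ≤ (L * M * D) * ‖v‖ := by
    have e4 : ⟪v, v⟫ = ⟪g - gradient f (xs i₀), v⟫ + (⟪gradient f (xs i₀), v⟫ - ⟪s, v⟫) := by
      rw [hv, inner_sub_left, inner_sub_left]; ring
    have e5 : ⟪g - gradient f (xs i₀), v⟫ ≤ ‖g - gradient f (xs i₀)‖ * ‖v‖ :=
      real_inner_le_norm _ _
    have e6 : ‖g - gradient f (xs i₀)‖ * ‖v‖ ≤ (L * M * D) * ‖v‖ := by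
      apply mul_le_mul_of_nonneg_right _ (norm_nonneg v)
      calc ‖g - gradient f (xs i₀)‖ ≤ L * ((M:ℝ) * D) := hB
        _ = L * M * D := by ring
    have e7 : ⟪v, v⟫ = ‖v‖ * ‖v‖ := real_inner_self_eq_norm_mul_norm v
    linarith
  show ‖v‖ ≤ L * M * D
  rcases le_or_gt ‖v‖ 0 with hv0 | hv0
  · have : (0:ℝ) ≤ L * M * D := by positivity
    linarith
  · exact le_of_mul_le_mul_right h2 hv0
end

section
/- Let F₁, …, F_N : ℝⁿ → ℝ be convex functions and let w₁, …, w_N > 0. Then the function φ : ℝⁿ × (0, ∞) → ℝ defined by φ(x, α) = α · log( Σ_{i=1}^N wᵢ · exp( Fᵢ(x) / α ) ) is jointly convex in (x, α) on ℝⁿ × (0, ∞). -/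
open Real Finset

/-- Weighted log-sum-exp is convex. -/
lemma lse_convex (N : ℕ) (hN : 0 < N) (w : Fin N → ℝ) (hw : ∀ i, 0 < w i) :
    ConvexOn ℝ Set.univ
      (fun t : Fin N → ℝ => Real.log (∑ i, w i * Real.exp (t i))) := by
  have hne : (Finset.univ : Finset (Fin N)).Nonempty := by
    simpa [Finset.univ_nonempty_iff] using Fin.pos_iff_nonempty.1 hN
  have hsum : ∀ t : Fin N → ℝ, 0 < ∑ i, w i * Real.exp (t i) := fun t =>
    Finset.sum_pos (fun i _ => mul_pos (hw i) (Real.exp_pos _)) hne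
  refine ⟨convex_univ, fun u _ v _ a b ha hb hab => ?_⟩
  simp only [Pi.add_apply, Pi.smul_apply, smul_eq_mul]
  set Sf := ∑ i, w i * Real.exp (u i) with hSf
  set Sg := ∑ i, w i * Real.exp (v i) with hSg
  have hSf0 : 0 < Sf := hsum u
  have hSg0 : 0 < Sg := hsum v
  -- Hölder: ∑ wᵢ exp(a uᵢ + b vᵢ) ≤ Sf^a * Sg^b
  have key : (∑ i, w i * Real.exp (a * u i + b * v i)) ≤ Sf ^ a * Sg ^ b := by
    have hterm : ∀ i, w i * Real.exp (a * u i + b * v i)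
        ≤ (a * ((w i * Real.exp (u i)) / Sf) + b * ((w i * Real.exp (v i)) / Sg))
          * (Sf ^ a * Sg ^ b) := by
      intro i
      have hfi : 0 < w i * Real.exp (u i) := mul_pos (hw i) (Real.exp_pos _)
      have hgi : 0 < w i * Real.exp (v i) := mul_pos (hw i) (Real.exp_pos _)
      have heq : w i * Real.exp (a * u i + b * v i)
          = ((w i * Real.exp (u i)) / Sf) ^ a * ((w i * Real.exp (v i)) / Sg) ^ b
            * (Sf ^ a * Sg ^ b) := by
        rw [Real.div_rpow hfi.le hSf0.le, Real.div_rpow hgi.le hSg0.le,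
          Real.mul_rpow (hw i).le (Real.exp_pos _).le,
          Real.mul_rpow (hw i).le (Real.exp_pos _).le]
        have h1 : Real.exp (u i) ^ a = Real.exp (a * u i) := by
          rw [Real.rpow_def_of_pos (Real.exp_pos _), Real.log_exp, mul_comm]
        have h2 : Real.exp (v i) ^ b = Real.exp (b * v i) := by
          rw [Real.rpow_def_of_pos (Real.exp_pos _), Real.log_exp, mul_comm]
        have h3 : w i ^ a * w i ^ b = w i := by
          rw [← Real.rpow_add (hw i), hab, Real.rpow_one]
        rw [h1, h2, Real.exp_add]
        conv_lhs => rw [← h3]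
        field_simp [(Real.rpow_pos_of_pos hSf0 a).ne', (Real.rpow_pos_of_pos hSg0 b).ne']
      rw [heq]
      have := Real.geom_mean_le_arith_mean2_weighted ha hb
        (div_nonneg hfi.le hSf0.le) (div_nonneg hgi.le hSg0.le) hab
      exact mul_le_mul_of_nonneg_right this
        (mul_nonneg (Real.rpow_nonneg hSf0.le _) (Real.rpow_nonneg hSg0.le _))
    calc (∑ i, w i * Real.exp (a * u i + b * v i))
        ≤ ∑ i, (a * ((w i * Real.exp (u i)) / Sf) + b * ((w i * Real.exp (v i)) / Sg))
            * (Sf ^ a * Sg ^ b) := Finset.sum_le_sum fun i _ => hterm i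
      _ = Sf ^ a * Sg ^ b := by
          rw [← Finset.sum_mul]
          have : (∑ i, (a * ((w i * Real.exp (u i)) / Sf)
              + b * ((w i * Real.exp (v i)) / Sg))) = 1 := by
            rw [Finset.sum_add_distrib, ← Finset.mul_sum, ← Finset.mul_sum,
              ← Finset.sum_div, ← Finset.sum_div, ← hSf, ← hSg,
              div_self hSf0.ne', div_self hSg0.ne', mul_one, mul_one, hab]
          rw [this, one_mul]
  calc Real.log (∑ i, w i * Real.exp (a * u i + b * v i))
      ≤ Real.log (Sf ^ a * Sg ^ b) := Real.log_le_log (hsum _) key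
    _ = a * Real.log Sf + b * Real.log Sg := by
        rw [Real.log_mul (Real.rpow_pos_of_pos hSf0 _).ne'
          (Real.rpow_pos_of_pos hSg0 _).ne', Real.log_rpow hSf0, Real.log_rpow hSg0]

/-- The sample-average entropic value-at-risk objective
`φ(x, α) = α · log( Σᵢ wᵢ exp(Fᵢ(x)/α) )`, with each `Fᵢ` convex and `wᵢ > 0`, is jointly
convex on `ℝⁿ × (0, ∞)`. -/
theorem stmt_17 (n N : ℕ) (hN : 0 < N)
    (F : Fin N → (EuclideanSpace ℝ (Fin n) → ℝ))
    (hF : ∀ i, ConvexOn ℝ Set.univ (F i))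
    (w : Fin N → ℝ) (hw : ∀ i, 0 < w i) :
    ConvexOn ℝ ((Set.univ : Set (EuclideanSpace ℝ (Fin n))) ×ˢ Set.Ioi (0:ℝ))
      (fun p : EuclideanSpace ℝ (Fin n) × ℝ =>
        p.2 * Real.log (∑ i, w i * Real.exp (F i p.1 / p.2))) := by
  have hne : (Finset.univ : Finset (Fin N)).Nonempty := by
    simpa [Finset.univ_nonempty_iff] using Fin.pos_iff_nonempty.1 hN
  have hsum : ∀ t : Fin N → ℝ, 0 < ∑ i, w i * Real.exp (t i) := fun t =>
    Finset.sum_pos (fun i _ => mul_pos (hw i) (Real.exp_pos _)) hne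
  refine ⟨(convex_univ.prod (convex_Ioi 0)), ?_⟩
  rintro ⟨x₁, α₁⟩ ⟨-, hα₁⟩ ⟨x₂, α₂⟩ ⟨-, hα₂⟩ a b ha hb hab
  simp only [Set.mem_Ioi] at hα₁ hα₂
  simp only [Prod.smul_fst, Prod.smul_snd, Prod.fst_add, Prod.snd_add, smul_eq_mul]
  set α : ℝ := a * α₁ + b * α₂ with hαdef
  have hα : 0 < α := by
    rw [hαdef]
    rcases eq_or_lt_of_le ha with h | h
    · have hb1 : b = 1 := by linarith
      rw [← h, hb1]; simpa using hα₂
    · linarith [mul_pos h hα₁, mul_nonneg hb hα₂.le]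
  set x := a • x₁ + b • x₂ with hxdef
  -- Step 1: F i x ≤ a * F i x₁ + b * F i x₂
  have h1 : ∀ i, F i x ≤ a * F i x₁ + b * F i x₂ := fun i => by
    simpa [smul_eq_mul] using (hF i).2 (Set.mem_univ x₁) (Set.mem_univ x₂) ha hb hab
  -- Step 2: monotonicity
  have h2 : (∑ i, w i * Real.exp (F i x / α))
      ≤ ∑ i, w i * Real.exp ((a * F i x₁ + b * F i x₂) / α) :=
    Finset.sum_le_sum fun i _ => mul_le_mul_of_nonneg_left
      (Real.exp_le_exp.2 (div_le_div_of_nonneg_right (h1 i) hα.le)) (hw i).le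
  -- Step 3: perspective via convexity of log-sum-exp
  set u : Fin N → ℝ := fun i => F i x₁ / α₁ with hu
  set v : Fin N → ℝ := fun i => F i x₂ / α₂ with hv
  set μ : ℝ := a * α₁ / α with hμdef
  set ν : ℝ := b * α₂ / α with hνdef
  have hμ : 0 ≤ μ := div_nonneg (mul_nonneg ha hα₁.le) hα.le
  have hν : 0 ≤ ν := div_nonneg (mul_nonneg hb hα₂.le) hα.le
  have hμν : μ + ν = 1 := by
    rw [hμdef, hνdef, ← add_div, hαdef, div_self hα.ne']
  have hg := (lse_convex N hN w hw).2 (Set.mem_univ u) (Set.mem_univ v) hμ hν hμν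
  simp only [Pi.add_apply, Pi.smul_apply, smul_eq_mul] at hg
  have harg : ∀ i, (a * F i x₁ + b * F i x₂) / α = μ * u i + ν * v i := by
    intro i
    rw [hμdef, hνdef, hu, hv]
    field_simp
  have h3 : (∑ i, w i * Real.exp ((a * F i x₁ + b * F i x₂) / α))
      = ∑ i, w i * Real.exp (μ * u i + ν * v i) := by
    exact Finset.sum_congr rfl fun i _ => by rw [harg i]
  calc α * Real.log (∑ i, w i * Real.exp (F i x / α))
      ≤ α * Real.log (∑ i, w i * Real.exp (μ * u i + ν * v i)) := by
        refine mul_le_mul_of_nonneg_left ?_ hα.le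
        rw [← h3]
        exact Real.log_le_log (hsum _) h2
    _ ≤ α * (μ * Real.log (∑ i, w i * Real.exp (u i))
          + ν * Real.log (∑ i, w i * Real.exp (v i))) :=
        mul_le_mul_of_nonneg_left hg hα.le
    _ = a * (α₁ * Real.log (∑ i, w i * Real.exp (F i x₁ / α₁)))
          + b * (α₂ * Real.log (∑ i, w i * Real.exp (F i x₂ / α₂))) := by
        rw [hμdef, hνdef]
        field_simp
        ring
end
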